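/- Compatibility of convex hull for belief-state transformers of probabilistic automata: for every relation R : Set (PMF X × PMF X), Ctx(B(R)) ⊆ B(Ctx(R)). Explicitly: if Θ : PMF (PMF X × PMF X) has finite support contained in B(R), then the pair (Θ.bind Prod.fst, Θ.bind Prod.snd) belongs to B(Ctx(R)). -/

import Mathlib

/-- The convex hull of a set of probability mass functions. -/
def convHullPMF {X : Type*} (T : Set (PMF X)) : Set (PMF X) :=
  {μ | ∃ Θ : PMF (PMF X), Θ.support.Finite ∧ Θ.support ⊆ T ∧ μ = Θ.bind id}

/-- The belief-state transformer (determinization) of a probabilistic automaton. -/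
def cPlus {X A : Type*} (c : X → A → Set (PMF X)) (φ : PMF X) (a : A) :
    Set (PMF X) :=
  {μ | ∃ h : X → PMF X, (∀ x ∈ φ.support, h x ∈ convHullPMF (c x a)) ∧ μ = φ.bind h}

/-- The relation lifting determined by the belief-state transformer. -/
def BliftPMF {X A : Type*} (c : X → A → Set (PMF X)) (R : Set (PMF X × PMF X)) :
    Set (PMF X × PMF X) :=
  {p | p.1.support.Finite ∧ p.2.support.Finite ∧
    ∀ a : A,
      (∀ φ' ∈ cPlus c p.1 a, ∃ ψ' ∈ cPlus c p.2 a, (φ', ψ') ∈ R) ∧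
      (∀ ψ' ∈ cPlus c p.2 a, ∃ φ' ∈ cPlus c p.1 a, (φ', ψ') ∈ R)}

/-- Convex hull closure of a relation on probability mass functions. -/
def CtxPMF {X : Type*} (R : Set (PMF X × PMF X)) : Set (PMF X × PMF X) :=
  {q | ∃ Θ : PMF (PMF X × PMF X), Θ.support.Finite ∧ Θ.support ⊆ R ∧
    q = (Θ.bind Prod.fst, Θ.bind Prod.snd)}

/-- bind only depends on values on the support -/
lemma pmf_bind_congr {α β : Type*} (p : PMF α) (f g : α → PMF β)
    (h : ∀ x ∈ p.support, f x = g x) : p.bind f = p.bind g := by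
  ext y
  rw [PMF.bind_apply, PMF.bind_apply]
  refine tsum_congr fun x => ?_
  by_cases hx : p x = 0
  · simp [hx]
  · rw [h x ((PMF.mem_support_iff p x).2 hx)]

/-- A finitely supported mixture of elements of a convex hull is in the convex hull. -/
lemma convHullPMF_bind {X : Type*} (T : Set (PMF X)) (Λ : PMF (PMF X))
    (hfin : Λ.support.Finite) (hsub : Λ.support ⊆ convHullPMF T) :
    Λ.bind id ∈ convHullPMF T := by
  classical
  let F : PMF X → PMF (PMF X) := fun μ =>
    if h : μ ∈ convHullPMF T then h.choose else PMF.pure μ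
  have hFbind : ∀ μ, (F μ).bind id = μ := by
    intro μ
    by_cases h : μ ∈ convHullPMF T
    · simp only [F, dif_pos h]
      exact h.choose_spec.2.2.symm
    · simp [F, dif_neg h]
  have hFfin : ∀ μ ∈ convHullPMF T, (F μ).support.Finite := by
    intro μ h; simp only [F, dif_pos h]; exact h.choose_spec.1
  have hFsub : ∀ μ ∈ convHullPMF T, (F μ).support ⊆ T := by
    intro μ h; simp only [F, dif_pos h]; exact h.choose_spec.2.1
  refine ⟨Λ.bind F, ?_, ?_, ?_⟩
  · rw [PMF.support_bind]
    exact hfin.biUnion fun μ hμ => hFfin μ (hsub hμ)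
  · rw [PMF.support_bind]
    exact Set.iUnion₂_subset fun μ hμ => hFsub μ (hsub hμ)
  · rw [PMF.bind_bind]
    exact (pmf_bind_congr Λ _ _ fun μ _ => (hFbind μ)).symm

/-- Key lemma: one direction of the lifting condition for the combined distribution. -/
lemma key_lemma {X A : Type*} (c : X → A → Set (PMF X)) (a : A)
    (Θ : PMF (PMF X × PMF X)) (hΘ : Θ.support.Finite)
    (S : PMF X → PMF X → Prop)
    (hmatch : ∀ p ∈ Θ.support, ∀ φ' ∈ cPlus c p.1 a, ∃ ψ' ∈ cPlus c p.2 a, S φ' ψ')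
    (φ' : PMF X) (hφ' : φ' ∈ cPlus c (Θ.bind Prod.fst) a) :
    ∃ ψ' ∈ cPlus c (Θ.bind Prod.snd) a,
      ∃ Θ' : PMF (PMF X × PMF X), Θ'.support.Finite ∧
        (∀ q ∈ Θ'.support, S q.1 q.2) ∧
        φ' = Θ'.bind Prod.fst ∧ ψ' = Θ'.bind Prod.snd := by
  classical
  obtain ⟨h, hh, rfl⟩ := hφ'
  have hmem : ∀ p ∈ Θ.support, p.1.bind h ∈ cPlus c p.1 a := by
    intro p hp
    exact ⟨h, fun x hx => hh x (by
      rw [PMF.support_bind]; exact Set.mem_biUnion hp hx), rfl⟩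
  have hchoice : ∀ p : PMF X × PMF X, ∃ g : X → PMF X,
      p ∈ Θ.support → ((∀ x ∈ p.2.support, g x ∈ convHullPMF (c x a)) ∧
        S (p.1.bind h) (p.2.bind g)) := by
    intro p
    by_cases hp : p ∈ Θ.support
    · obtain ⟨ψ', ⟨g, hg, rfl⟩, hS⟩ := hmatch p hp _ (hmem p hp)
      exact ⟨g, fun _ => ⟨hg, hS⟩⟩
    · exact ⟨fun x => PMF.pure x, fun hp' => absurd hp' hp⟩
  choose g hg using hchoice
  set φ2 := Θ.bind Prod.snd with hφ2def
  have hφ2apply : ∀ x, φ2 x = ∑' p, Θ p * p.2 x := fun x => PMF.bind_apply Θ _ x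
  -- the conditional distribution over pairs, given x
  have hWsum : ∀ x, φ2 x ≠ 0 → HasSum (fun p => Θ p * p.2 x * (φ2 x)⁻¹) 1 := by
    intro x hx
    have : ∑' p, Θ p * p.2 x * (φ2 x)⁻¹ = 1 := by
      rw [ENNReal.tsum_mul_right, ← hφ2apply x,
        ENNReal.mul_inv_cancel hx (PMF.apply_ne_top _ _)]
    exact this ▸ ENNReal.summable.hasSum
  let W : X → PMF (PMF X × PMF X) := fun x =>
    if hx : φ2 x ≠ 0 then ⟨fun p => Θ p * p.2 x * (φ2 x)⁻¹, hWsum x hx⟩ else Θ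
  have hWapply : ∀ x, φ2 x ≠ 0 → ∀ p, W x p = Θ p * p.2 x * (φ2 x)⁻¹ := by
    intro x hx p
    have hW : W x = ⟨fun p => Θ p * p.2 x * (φ2 x)⁻¹, hWsum x hx⟩ := dif_pos hx
    rw [hW]; rfl
  have hWsupp : ∀ x, φ2 x ≠ 0 → ∀ p ∈ (W x).support,
      p ∈ Θ.support ∧ x ∈ p.2.support := by
    intro x hx p hp
    rw [PMF.mem_support_iff, hWapply x hx] at hp
    constructor
    · rw [PMF.mem_support_iff]; intro h0; exact hp (by simp [h0])
    · rw [PMF.mem_support_iff]; intro h0; exact hp (by simp [h0])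
  let k : X → PMF X := fun x => (W x).bind (fun p => g p x)
  have hk : ∀ x ∈ φ2.support, k x ∈ convHullPMF (c x a) := by
    intro x hx
    rw [PMF.mem_support_iff] at hx
    have hkx : k x = (PMF.map (fun p => g p x) (W x)).bind id := by
      rw [PMF.bind_map]; rfl
    rw [hkx]
    refine convHullPMF_bind _ _ ?_ ?_
    · rw [PMF.support_map]
      exact (hΘ.subset fun p hp => (hWsupp x hx p hp).1).image _
    · rw [PMF.support_map]
      rintro μ ⟨p, hp, rfl⟩
      obtain ⟨hp1, hp2⟩ := hWsupp x hx p hp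
      exact (hg p hp1).1 x hp2
  -- the crucial equality
  have hbindeq : φ2.bind k = Θ.bind (fun p => p.2.bind (g p)) := by
    ext y
    rw [PMF.bind_apply φ2 k y, PMF.bind_apply Θ _ y]
    have RHS : ∑' p, Θ p * (p.2.bind (g p)) y
        = ∑' x, ∑' p, Θ p * (p.2 x * (g p x) y) := by
      rw [← ENNReal.tsum_comm]
      refine tsum_congr fun p => ?_
      rw [PMF.bind_apply, ← ENNReal.tsum_mul_left]
    rw [RHS]
    refine tsum_congr fun x => ?_
    by_cases hx : φ2 x = 0
    · rw [hx, zero_mul]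
      symm
      rw [ENNReal.tsum_eq_zero]
      intro p
      have h0 : Θ p * p.2 x = 0 := by
        have := (hφ2apply x) ▸ hx
        exact ENNReal.tsum_eq_zero.1 this p
      rw [← mul_assoc, h0, zero_mul]
    · have hky : (k x) y = ∑' p, (W x) p * (g p x) y := PMF.bind_apply _ _ y
      rw [hky, ← ENNReal.tsum_mul_left]
      refine tsum_congr fun p => ?_
      rw [hWapply x hx]
      have : φ2 x * (Θ p * p.2 x * (φ2 x)⁻¹ * (g p x) y)
          = (φ2 x * (φ2 x)⁻¹) * (Θ p * (p.2 x * (g p x) y)) := by ring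
      rw [this, ENNReal.mul_inv_cancel hx (PMF.apply_ne_top _ _), one_mul]
  refine ⟨φ2.bind k, ⟨k, hk, rfl⟩,
    Θ.map (fun p => (p.1.bind h, p.2.bind (g p))), ?_, ?_, ?_, ?_⟩
  · rw [PMF.support_map]
    exact hΘ.image _
  · rw [PMF.support_map]
    rintro q ⟨p, hp, rfl⟩
    exact (hg p hp).2
  · rw [PMF.bind_map, PMF.bind_bind]
    rfl
  · rw [hbindeq, PMF.bind_map]
    rfl

/-- Compatibility of convex hull for belief-state transformers of probabilistic
automata. -/
theorem convex_hull_compatible {X A : Type*} (c : X → A → Set (PMF X))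
    (hc : ∀ (x : X) (a : A), ∀ ψ ∈ c x a, ψ.support.Finite)
    (R : Set (PMF X × PMF X)) :
    CtxPMF (BliftPMF c R) ⊆ BliftPMF c (CtxPMF R) := by
  rintro ⟨φ, ψ⟩ ⟨Θ, hΘfin, hΘsub, heq⟩
  rw [Prod.ext_iff] at heq
  obtain ⟨h1, h2⟩ := heq
  simp only at h1 h2
  subst h1; subst h2
  refine ⟨?_, ?_, fun a => ⟨?_, ?_⟩⟩
  · rw [PMF.support_bind]
    exact hΘfin.biUnion fun p hp => (hΘsub hp).1
  · rw [PMF.support_bind]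
    exact hΘfin.biUnion fun p hp => (hΘsub hp).2.1
  · -- forward direction
    intro φ' hφ'
    obtain ⟨ψ', hψ', Θ', hfin, hS, heq1, heq2⟩ :=
      key_lemma c a Θ hΘfin (fun u v => (u, v) ∈ R)
        (fun p hp => ((hΘsub hp).2.2 a).1) φ' hφ'
    exact ⟨ψ', hψ', Θ', hfin, fun q hq => hS q hq, Prod.ext heq1 heq2⟩
  · -- backward direction, via swapping
    intro ψ' hψ'
    have hswapfst : (PMF.map Prod.swap Θ).bind Prod.fst = Θ.bind Prod.snd := by
      rw [PMF.bind_map]; rfl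
    have hswapsnd : (PMF.map Prod.swap Θ).bind Prod.snd = Θ.bind Prod.fst := by
      rw [PMF.bind_map]; rfl
    have hψ'' : ψ' ∈ cPlus c ((PMF.map Prod.swap Θ).bind Prod.fst) a := by
      rw [hswapfst]; exact hψ'
    obtain ⟨φ', hφ', Θ', hfin, hS, heq1, heq2⟩ :=
      key_lemma c a (PMF.map Prod.swap Θ)
        (by rw [PMF.support_map]; exact hΘfin.image _)
        (fun u v => (v, u) ∈ R)
        (by
          rintro p hp
          rw [PMF.support_map] at hp
          obtain ⟨p0, hp0, rfl⟩ := hp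
          exact fun μ hμ => ((hΘsub hp0).2.2 a).2 μ hμ)
        ψ' hψ''
    rw [hswapsnd] at hφ'
    refine ⟨φ', hφ', PMF.map Prod.swap Θ', ?_, ?_, ?_⟩
    · rw [PMF.support_map]; exact hfin.image _
    · rw [PMF.support_map]
      rintro q ⟨q0, hq0, rfl⟩
      exact hS q0 hq0
    · rw [PMF.bind_map, PMF.bind_map]
      exact Prod.ext heq2 heq1
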